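/- A graph B on 2n vertices is 2-variegated (i.e., its vertex set can be partitioned into two parts of size n such that each vertex of one part is adjacent to exactly one vertex of the other part) if and only if there exists a set S of n pairwise disjoint (independent) edges in B such that no cycle of B contains an odd number of edges from S. -/

import Mathlib

open SimpleGraph
open scoped Classical

/-- A graph is 2-variegated (bivariegated) if its vertex set can be partitioned into
two equinumerous parts such that every vertex is adjacent to exactly one vertex
of the part not containing it. -/
def SimpleGraph.IsBivariegated {V : Type*} (G : SimpleGraph V) : Prop :=
  ∃ f : V → Bool,
    Nonempty ({v // f v = true} ≃ {v // f v = false}) ∧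
    ∀ v : V, ∃! w : V, f w ≠ f v ∧ G.Adj v w

section Aux

variable {V : Type*} [Fintype V] [DecidableEq V]

/-- The number of edges of a walk lying in `S` (with multiplicity). -/
noncomputable def cntS (B : SimpleGraph V) (S : Finset (Sym2 V)) {u v : V}
    (p : B.Walk u v) : ℕ :=
  (p.edges.filter (fun e => decide (e ∈ S))).length

theorem cntS_cons {B : SimpleGraph V} {S : Finset (Sym2 V)} {u v w : V}
    (h : B.Adj u v) (p : B.Walk v w) :
    cntS B S (Walk.cons h p) = (if s(u,v) ∈ S then 1 else 0) + cntS B S p := by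
  simp only [cntS, Walk.edges_cons, List.filter_cons]
  split <;> simp_all <;> omega

theorem cntS_append {B : SimpleGraph V} {S : Finset (Sym2 V)} {u v w : V}
    (p : B.Walk u v) (q : B.Walk v w) :
    cntS B S (p.append q) = cntS B S p + cntS B S q := by
  simp [cntS, Walk.edges_append, List.filter_append]

theorem cntS_reverse {B : SimpleGraph V} {S : Finset (Sym2 V)} {u v : V} (p : B.Walk u v) :
    cntS B S p.reverse = cntS B S p := by
  simp [cntS, Walk.edges_reverse, List.filter_reverse]

theorem cntS_copy {B : SimpleGraph V} {S : Finset (Sym2 V)} {u v u' v' : V}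
    (p : B.Walk u v) (h : u = u') (h' : v = v') :
    cntS B S (p.copy h h') = cntS B S p := by
  simp [cntS, Walk.edges_copy]

/-- If every cycle contains an even number of edges of `S`, then every closed walk
contains an even number of edges of `S` (with multiplicity). -/
theorem even_cntS_closed {B : SimpleGraph V} {S : Finset (Sym2 V)}
    (hcyc : ∀ (v : V) (c : B.Walk v v), c.IsCycle → ¬ Odd (cntS B S c)) :
    ∀ (N : ℕ) (v : V) (c : B.Walk v v), c.length ≤ N → Even (cntS B S c) := by
  intro N
  induction N with
  | zero =>
    intro v c hc
    cases c with
    | nil => simp [cntS]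
    | cons h p => simp [Walk.length_cons] at hc
  | succ N ih =>
    intro v c hlen
    by_cases hcy : c.IsCycle
    · exact Nat.not_odd_iff_even.mp (hcyc v c hcy)
    cases c with
    | nil => simp [cntS]
    | cons h p =>
      rename_i w
      -- h : B.Adj v w, p : B.Walk w v
      by_cases hnd : (Walk.cons h p).support.tail.Nodup
      · -- tail nodup: p is a path; since not a cycle, the edge s(v,w) ∈ p.edges,
        -- forcing p to be the single edge w—v (backtrack), which has even count.
        have hps : p.support.Nodup := by simpa using hnd
        have hp : p.IsPath := Walk.IsPath.mk' hps
        have he : s(v, w) ∈ p.edges := by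
          by_contra he
          exact hcy ((Walk.cons_isCycle_iff p h).mpr ⟨hp, he⟩)
        cases p with
        | nil => exact absurd rfl h.ne
        | cons h2 q =>
          rename_i x
          -- h2 : B.Adj w x, q : B.Walk x v
          cases q with
          | nil =>
            -- c = v → w → v
            have : s(w, v) = s(v, w) := Sym2.eq_swap
            simp only [cntS, Walk.edges_cons, Walk.edges_nil, this]
            by_cases hs : s(v,w) ∈ S <;> simp [hs, List.filter_cons]
          | cons h3 r =>
            rename_i y
            exfalso
            rw [Walk.edges_cons, List.mem_cons] at he
            rcases he with he | he
            · rw [Sym2.eq_iff] at he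
              rcases he with ⟨hvw, _⟩ | ⟨hvx, _⟩
              · exact h.ne hvw
              · -- v = x : then cons h3 r : B.Walk v v, support nodup violated
                subst hvx
                have := (Walk.cons_isPath_iff h2 (Walk.cons h3 r)).mp hp
                have : (Walk.cons h3 r).support.Nodup := this.1.support_nodup
                rw [Walk.support_cons, List.nodup_cons] at this
                exact this.1 (by
                  have := Walk.end_mem_support r
                  simpa using this)
            · have hwmem : w ∈ (Walk.cons h3 r).support :=
                Walk.snd_mem_support_of_mem_edges _ he
              exact ((Walk.cons_isPath_iff h2 _).mp hp).2 hwmem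
      · -- a repeated vertex u in the cyclic support: rotate and split
        obtain ⟨u, hu⟩ : ∃ u, 2 ≤ (Walk.cons h p).support.tail.count u := by
          rw [← List.exists_duplicate_iff_not_nodup] at hnd
          obtain ⟨x, hx⟩ := hnd
          exact ⟨x, List.duplicate_iff_two_le_count.mp hx⟩
        have husupp : u ∈ (Walk.cons h p).support :=
          List.mem_of_mem_tail (List.count_pos_iff.mp (by omega))
        set c' := (Walk.cons h p).rotate u husupp with hc'
        have hperm : c'.edges.Perm (Walk.cons h p).edges :=
          (Walk.rotate_edges (Walk.cons h p) u husupp).perm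
        have hcnt : cntS B S c' = cntS B S (Walk.cons h p) := by
          simpa [cntS] using (hperm.filter (fun e => decide (e ∈ S))).length_eq
        have hlen' : c'.length = (Walk.cons h p).length := by
          rw [← Walk.length_edges, ← Walk.length_edges]
          exact hperm.length_eq
        have hcount' : 2 ≤ c'.support.tail.count u := by
          have := (Walk.support_rotate (Walk.cons h p) u husupp).perm
          rwa [this.count_eq]
        have hnotnil : ¬ c'.Nil := by
          rw [Walk.nil_iff_length_eq, hlen']
          simp [Walk.length_cons]
        obtain ⟨b, hb, p', hcons⟩ := Walk.not_nil_iff.mp hnotnil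
        have humem : u ∈ p'.support := Walk.end_mem_support p'
        have hspec := Walk.take_spec p' humem
        have hone := Walk.count_support_takeUntil_eq_one p' humem
        have hsupp : p'.support
            = (p'.takeUntil u humem).support ++ (p'.dropUntil u humem).support.tail := by
          conv_lhs => rw [← hspec]
          exact Walk.support_append _ _
        have htailcount : 1 ≤ (p'.dropUntil u humem).support.tail.count u := by
          have : c'.support.tail = p'.support := by rw [hcons, Walk.support_cons, List.tail_cons]
          rw [this, hsupp, List.count_append, hone] at hcount'
          omega
        have hndrop : 1 ≤ (p'.dropUntil u humem).length := by
          have h1 : (p'.dropUntil u humem).support.tail.length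
              = (p'.dropUntil u humem).length := by
            rw [Walk.support_eq_cons]; simp
          have := List.count_le_length (l := (p'.dropUntil u humem).support.tail) (a := u)
          omega
        have hlensum : (p'.takeUntil u humem).length + (p'.dropUntil u humem).length
            = p'.length := by
          conv_rhs => rw [← hspec]
          exact (Walk.length_append _ _).symm
        have hplen : p'.length ≤ N := by
          have : c'.length = p'.length + 1 := by rw [hcons]; simp [Walk.length_cons]
          rw [hlen'] at this
          simp only [Walk.length_cons] at this
          rw [Walk.length_cons] at hlen
          omega
        have hb1 : (p'.takeUntil u humem).length + 1 ≤ N := by omega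
        have e1 : Even (cntS B S (Walk.cons hb (p'.takeUntil u humem))) := by
          apply ih u
          rw [Walk.length_cons]
          exact hb1
        have e2 : Even (cntS B S (p'.dropUntil u humem)) := by
          apply ih u
          omega
        have hsplit : cntS B S p'
            = cntS B S (p'.takeUntil u humem) + cntS B S (p'.dropUntil u humem) := by
          conv_lhs => rw [← hspec]
          exact cntS_append _ _
        have hsum : cntS B S c'
            = cntS B S (Walk.cons hb (p'.takeUntil u humem)) + cntS B S (p'.dropUntil u humem) := by
          rw [hcons, cntS_cons, cntS_cons, hsplit]
          ring
        rw [← hcnt, hsum]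
        exact e1.add e2

/-- The `n` independent edges cover every vertex. -/
theorem cover_of_S {B : SimpleGraph V} {S : Finset (Sym2 V)} {n : ℕ}
    (hcard : Fintype.card V = 2 * n) (hcardS : S.card = n)
    (hedge : ∀ e ∈ S, e ∈ B.edgeSet)
    (hind : ∀ e ∈ S, ∀ f ∈ S, e ≠ f → ∀ v : V, ¬ (v ∈ e ∧ v ∈ f)) :
    ∀ v : V, ∃ e ∈ S, v ∈ e := by
  classical
  set toF : Sym2 V → Finset V := fun e => Finset.univ.filter (· ∈ e) with htoF
  have hmemF : ∀ (e : Sym2 V) (v : V), v ∈ toF e ↔ v ∈ e := by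
    intro e v; simp [htoF]
  have hcard2 : ∀ e ∈ S, (toF e).card = 2 := by
    intro e he
    obtain ⟨a, b⟩ := e
    have hab : a ≠ b := by
      intro hab
      exact B.not_isDiag_of_mem_edgeSet (hedge _ he) (by simp [hab])
    have : toF s(a, b) = {a, b} := by
      ext x; simp [htoF, Sym2.mem_iff]
    rw [this, Finset.card_insert_of_notMem (by simpa using hab), Finset.card_singleton]
  have hdisj : ∀ e ∈ S, ∀ f ∈ S, e ≠ f → Disjoint (toF e) (toF f) := by
    intro e he f hf hne
    rw [Finset.disjoint_left]
    intro x hxe hxf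
    exact hind e he f hf hne x ⟨(hmemF e x).mp hxe, (hmemF f x).mp hxf⟩
  have hbu : (S.biUnion toF).card = 2 * n := by
    rw [Finset.card_biUnion hdisj, Finset.sum_congr rfl hcard2]
    simp [hcardS, mul_comm]
  have huniv : S.biUnion toF = Finset.univ := by
    apply Finset.eq_univ_of_card
    rw [hbu, hcard]
  intro v
  have : v ∈ S.biUnion toF := by rw [huniv]; exact Finset.mem_univ v
  obtain ⟨e, he, hv⟩ := Finset.mem_biUnion.mp this
  exact ⟨e, he, (hmemF e v).mp hv⟩

end Aux

/-- A graph `B` on `2n` vertices is 2-variegated iff there is a set `S` of `n`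
pairwise independent edges such that no cycle of `B` contains an odd number of
edges from `S`. -/
theorem bivariegated_iff_exists_special_edges
    {V : Type*} [Fintype V] [DecidableEq V] (B : SimpleGraph V) (n : ℕ)
    (hcard : Fintype.card V = 2 * n) :
    B.IsBivariegated ↔
      ∃ S : Finset (Sym2 V), S.card = n ∧
        (∀ e ∈ S, e ∈ B.edgeSet) ∧
        (∀ e ∈ S, ∀ f ∈ S, e ≠ f → ∀ v : V, ¬ (v ∈ e ∧ v ∈ f)) ∧
        (∀ (v : V) (c : B.Walk v v), c.IsCycle →
          ¬ Odd ((c.edges.filter (fun e => decide (e ∈ S))).length)) := by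
  constructor
  · -- Forward direction
    rintro ⟨f, ⟨e⟩, huniq⟩
    classical
    set m : V → V := fun v => (huniq v).exists.choose with hmdef
    have hm1 : ∀ v, f (m v) ≠ f v ∧ B.Adj v (m v) := fun v => (huniq v).exists.choose_spec
    have hmu : ∀ v w, f w ≠ f v → B.Adj v w → w = m v := by
      intro v w h1 h2
      exact (huniq v).unique ⟨h1, h2⟩ ⟨(hm1 v).1, (hm1 v).2⟩
    have hinv : ∀ v, m (m v) = v := by
      intro v
      exact (hmu (m v) v (Ne.symm (hm1 v).1) (hm1 v).2.symm).symm
    set T : Finset V := Finset.univ.filter (fun v => f v = true) with hT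
    refine ⟨T.image (fun v => s(v, m v)), ?_, ?_, ?_, ?_⟩
    · -- cardinality
      have hinj : Set.InjOn (fun v => s(v, m v)) T := by
        intro u hu v hv huv
        simp only [Sym2.eq_iff] at huv
        rcases huv with ⟨h1, _⟩ | ⟨h1, h2⟩
        · exact h1
        · exfalso
          rw [hT, Finset.mem_coe, Finset.mem_filter] at hu hv
          have := (hm1 v).1
          rw [← h1, hu.2, hv.2] at this
          exact this rfl
      rw [Finset.card_image_of_injOn hinj]
      -- T.card = n
      have h1 : Fintype.card {v // f v = true} = T.card := Fintype.card_subtype _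
      have h2 : Fintype.card {v // f v = false}
          = (Finset.univ.filter (fun v => f v = false)).card := Fintype.card_subtype _
      have h3 : T.card + (Finset.univ.filter (fun v => f v = false)).card
          = Fintype.card V := by
        have h5 : Finset.univ.filter (fun v => f v = false)
            = Finset.univ.filter (fun v => ¬ f v = true) := by
          apply Finset.filter_congr; intro x _; simp
        rw [hT, h5, Finset.card_filter_add_card_filter_not, Finset.card_univ]
      have h4 : T.card = (Finset.univ.filter (fun v => f v = false)).card := by
        rw [← h1, ← h2]
        exact Fintype.card_congr e
      omega
    · -- edges of B
      intro ed hed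
      obtain ⟨v, hv, rfl⟩ := Finset.mem_image.mp hed
      exact (hm1 v).2
    · -- independence
      intro e1 he1 e2 he2 hne x ⟨hx1, hx2⟩
      obtain ⟨u, hu, rfl⟩ := Finset.mem_image.mp he1
      obtain ⟨v, hv, rfl⟩ := Finset.mem_image.mp he2
      rw [hT, Finset.mem_filter] at hu hv
      apply hne
      rw [Sym2.mem_iff] at hx1 hx2
      have hfmu := (hm1 u).1
      have hfmv := (hm1 v).1
      rcases hx1 with rfl | rfl
      · rcases hx2 with rfl | rfl
        · rfl
        · -- x = u = m v
          rw [hu.2, hv.2] at hfmv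
          exact absurd rfl hfmv
      · rcases hx2 with rfl | hx2
        · -- m u = v
          rw [hv.2, hu.2] at hfmu
          exact absurd rfl hfmu
        · -- m u = m v
          have : u = v := by rw [← hinv u, hx2, hinv v]
          rw [this]
    · -- cycle condition: in fact every closed walk has even count
      have cross : ∀ a b : V, B.Adj a b →
          (s(a, b) ∈ T.image (fun v => s(v, m v)) ↔ f a ≠ f b) := by
        intro a b hab
        constructor
        · intro hmem
          obtain ⟨v, hv, hveq⟩ := Finset.mem_image.mp hmem
          rw [hT, Finset.mem_filter] at hv
          rw [Sym2.eq_iff] at hveq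
          have := (hm1 v).1
          rcases hveq with ⟨rfl, rfl⟩ | ⟨rfl, rfl⟩
          · exact fun h => this (by rw [h])
          · exact fun h => this (by rw [h.symm])
        · intro hne
          cases hfa : f a with
          | true =>
            have hb : b = m a := hmu a b (by rw [hfa]; intro hc; exact hne (by rw [hc, hfa])) hab
            have ha : a ∈ T := by rw [hT, Finset.mem_filter]; exact ⟨Finset.mem_univ a, hfa⟩
            have : s(a, m a) ∈ T.image (fun v => s(v, m v)) := Finset.mem_image_of_mem _ ha
            rwa [← hb] at this
          | false =>
            have hfb : f b = true := by
              cases hfb : f b with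
              | true => rfl
              | false => exact absurd (by rw [hfa, hfb]) hne
            have ha : a = m b := hmu b a (by rw [hfb, hfa]; simp) hab.symm
            have hbT : b ∈ T := by rw [hT, Finset.mem_filter]; exact ⟨Finset.mem_univ b, hfb⟩
            have : s(b, m b) ∈ T.image (fun v => s(v, m v)) := Finset.mem_image_of_mem _ hbT
            rw [← ha] at this
            rwa [Sym2.eq_swap] at this
      have par : ∀ (a b : V) (p : B.Walk a b),
          Odd (cntS B (T.image (fun v => s(v, m v))) p) ↔ (f a ≠ f b) := by
        intro a b p
        induction p with
        | nil => simp [cntS]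
        | @cons u x w h q ih =>
          rw [cntS_cons]
          by_cases hs : s(u, x) ∈ T.image (fun v => s(v, m v))
          · rw [if_pos hs, add_comm, Nat.odd_add_one, ih]
            have hx : f u ≠ f x := (cross u x h).mp hs
            cases hu' : f u <;> cases hx' : f x <;> cases hw' : f w <;> simp_all
          · rw [if_neg hs, zero_add, ih]
            have heq : f u = f x := by
              by_contra hne
              exact hs ((cross u x h).mpr hne)
            rw [heq]
      intro v c _ hodd
      exact (par v v c).mp hodd rfl
  · -- Backward direction
    rintro ⟨S, hcardS, hedge, hind, hcyc⟩
    classical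
    have hcover := cover_of_S hcard hcardS hedge hind
    have hex : ∀ v : V, ∃ w, s(v, w) ∈ S := by
      intro v
      obtain ⟨ed, he, hv⟩ := hcover v
      obtain ⟨w, rfl⟩ := Sym2.mem_iff_exists.mp hv
      exact ⟨w, he⟩
    choose m hmS using hex
    have hAdjm : ∀ v, B.Adj v (m v) := fun v => (B.mem_edgeSet).mp (hedge _ (hmS v))
    have huniqm : ∀ v w, s(v, w) ∈ S → w = m v := by
      intro v w hw
      by_cases hne : s(v, w) = s(v, m v)
      · rw [Sym2.eq_iff] at hne
        rcases hne with ⟨_, h2⟩ | ⟨h1, _⟩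
        · exact h2
        · exact absurd h1.symm (hAdjm v).ne'
      · exact absurd ⟨Sym2.mem_mk_left v w, Sym2.mem_mk_left v (m v)⟩
          (hind _ hw _ (hmS v) hne v)
    have hinv : ∀ v, m (m v) = v := by
      intro v
      have : s(m v, v) ∈ S := by rw [Sym2.eq_swap]; exact hmS v
      exact (huniqm (m v) v this).symm
    -- coloring by parity of S-edges on a walk from the component basepoint
    have hreach : ∀ v : V, B.Reachable ((B.connectedComponentMk v).out) v := fun v =>
      ConnectedComponent.eq.mp (Quot.out_eq (B.connectedComponentMk v))
    have wk : ∀ v : V, B.Walk ((B.connectedComponentMk v).out) v := fun v => (hreach v).some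
    set f : V → Bool := fun v => decide (Odd (cntS B S (wk v))) with hf
    have heven := even_cntS_closed (B := B) (S := S) hcyc
    have hWD : ∀ (a b : V) (p q : B.Walk a b), (Odd (cntS B S p) ↔ Odd (cntS B S q)) := by
      intro a b p q
      have := heven (p.append q.reverse).length a (p.append q.reverse) le_rfl
      rw [cntS_append, cntS_reverse, Nat.even_add] at this
      rw [← Nat.not_even_iff_odd, ← Nat.not_even_iff_odd (n := cntS B S q)]
      tauto
    have hstep : ∀ a b : V, B.Adj a b → ((f a ≠ f b) ↔ s(a, b) ∈ S) := by
      intro a b hab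
      have hcomp : (B.connectedComponentMk a).out = (B.connectedComponentMk b).out := by
        rw [ConnectedComponent.eq.mpr hab.reachable]
      have hiff := hWD _ _ (((wk a).copy hcomp rfl).append (Walk.cons hab Walk.nil)) (wk b)
      have hnil : cntS B S (Walk.nil : B.Walk b b) = 0 := by simp [cntS]
      rw [cntS_append, cntS_copy, cntS_cons, hnil, add_zero] at hiff
      rw [hf]
      simp only [ne_eq, decide_eq_decide]
      by_cases hs : s(a, b) ∈ S
      · rw [if_pos hs] at hiff
        simp [hs]
        rw [← hiff]
        rw [Nat.odd_add_one]
        tauto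
      · rw [if_neg hs, add_zero] at hiff
        simp [hs]
        tauto
    have hflip : ∀ v, f (m v) ≠ f v := by
      intro v
      exact Ne.symm ((hstep v (m v) (hAdjm v)).mpr (hmS v))
    refine ⟨f, ⟨⟨fun x => ⟨m x.1, ?_⟩, fun x => ⟨m x.1, ?_⟩, ?_, ?_⟩⟩, ?_⟩
    · have := hflip x.1; rw [x.2] at this; simpa using this
    · have := hflip x.1; rw [x.2] at this; simpa using this
    · intro x; exact Subtype.ext (hinv x.1)
    · intro x; exact Subtype.ext (hinv x.1)
    · intro v
      refine ⟨m v, ⟨hflip v, hAdjm v⟩, ?_⟩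
      rintro w ⟨hw1, hw2⟩
      exact huniqm v w ((hstep v w hw2).mp (Ne.symm hw1))
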